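/- arXiv:1302.4245 — 2 statements merged into one kernel-verified Lean document; each statement's English description precedes it below -/
import Mathlib

section
/- The function k(\tau) = exp(-2\pi^2 \tau^2 \sigma^2) \cos(2\pi \tau \mu) on \mathbb{R} is a positive definite function: for any points x_1, ..., x_n \in \mathbb{R} and complex numbers c_1, ..., c_n, \sum_{i,j} c_i \overline{c_j} k(x_i - x_j) \geq 0. -/
open Real

/-- The single-component spectral mixture kernel is a positive definite function on ℝ. -/
theorem sm_component_kernel_posdef (μ σ : ℝ) (hσ : 0 ≤ σ)
    (n : ℕ) (x : Fin n → ℝ) (c : Fin n → ℂ) :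
    0 ≤ (∑ i, ∑ j, c i * (starRingEnd ℂ) (c j) *
      ((Real.exp (-2 * π ^ 2 * (x i - x j) ^ 2 * σ ^ 2) *
        Real.cos (2 * π * (x i - x j) * μ) : ℝ) : ℂ)).re := by
  set a : ℝ := 2 * π ^ 2 * σ ^ 2 with ha_def
  set b : ℝ := 2 * π * μ with hb_def
  set E : Fin n → ℂ := fun i => Complex.exp ((b * x i : ℝ) * Complex.I) with hE
  set R : Fin n → ℂ := fun i => ((Real.exp (-(a * x i ^ 2)) : ℝ) : ℂ) with hR
  set u : Fin n → ℕ → ℂ := fun i m => c i * R i * (x i : ℂ) ^ m * E i with hu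
  set v : Fin n → ℕ → ℂ := fun i m => c i * R i * (x i : ℂ) ^ m * (starRingEnd ℂ) (E i) with hv
  set K : Fin n × Fin n → ℂ := fun p =>
    R p.1 * R p.2 * c p.1 * (starRingEnd ℂ) (c p.2) *
      (E p.1 * (starRingEnd ℂ) (E p.2) + (starRingEnd ℂ) (E p.1) * E p.2) / 2 with hK
  set g : Fin n × Fin n → ℕ → ℂ := fun p m =>
    (((2 * a * x p.1 * x p.2 : ℝ) : ℂ) ^ m / m.factorial) * K p with hg
  have hEc : ∀ i, (starRingEnd ℂ) (E i) = Complex.exp (-((b * x i : ℝ) * Complex.I)) := by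
    intro i
    rw [hE, ← Complex.exp_conj, map_mul, Complex.conj_ofReal, Complex.conj_I, mul_neg]
  -- summability of each pair series
  have hsum : ∀ p : Fin n × Fin n, Summable (g p) := by
    intro p
    exact (NormedSpace.expSeries_div_summable ((2 * a * x p.1 * x p.2 : ℝ) : ℂ)).mul_right (K p)
  -- per-pair identity
  have key : ∀ p : Fin n × Fin n,
      c p.1 * (starRingEnd ℂ) (c p.2) *
        ((Real.exp (-2 * π ^ 2 * (x p.1 - x p.2) ^ 2 * σ ^ 2) *
          Real.cos (2 * π * (x p.1 - x p.2) * μ) : ℝ) : ℂ) = ∑' m, g p m := by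
    intro p
    have htsum : (∑' m, g p m) = Complex.exp ((2 * a * x p.1 * x p.2 : ℝ) : ℂ) * K p := by
      rw [hg]
      simp only
      rw [tsum_mul_right, Complex.exp_eq_exp_ℂ, NormedSpace.exp_eq_tsum_div]
    rw [htsum]
    simp only [hK, hEc, hR]
    have e1 : Complex.exp ((2 * a * x p.1 * x p.2 : ℝ) : ℂ) *
        (((Real.exp (-(a * x p.1 ^ 2)) : ℝ) : ℂ) * ((Real.exp (-(a * x p.2 ^ 2)) : ℝ) : ℂ)) *
        (E p.1 * Complex.exp (-((b * x p.2 : ℝ) * Complex.I))) =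
        ((Real.exp (-2 * π ^ 2 * (x p.1 - x p.2) ^ 2 * σ ^ 2) : ℝ) : ℂ) *
          Complex.exp (((2 * π * (x p.1 - x p.2) * μ : ℝ) : ℂ) * Complex.I) := by
      simp only [hE, ha_def, hb_def, Complex.ofReal_exp, ← Complex.exp_add]
      congr 1
      push_cast
      ring
    have e2 : Complex.exp ((2 * a * x p.1 * x p.2 : ℝ) : ℂ) *
        (((Real.exp (-(a * x p.1 ^ 2)) : ℝ) : ℂ) * ((Real.exp (-(a * x p.2 ^ 2)) : ℝ) : ℂ)) *
        (Complex.exp (-((b * x p.1 : ℝ) * Complex.I)) * E p.2) =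
        ((Real.exp (-2 * π ^ 2 * (x p.1 - x p.2) ^ 2 * σ ^ 2) : ℝ) : ℂ) *
          Complex.exp (-((2 * π * (x p.1 - x p.2) * μ : ℝ) : ℂ) * Complex.I) := by
      simp only [hE, ha_def, hb_def, Complex.ofReal_exp, ← Complex.exp_add]
      congr 1
      push_cast
      ring
    rw [Complex.ofReal_mul, Complex.ofReal_cos, Complex.cos]
    linear_combination (-(c p.1 * (starRingEnd ℂ) (c p.2)) / 2) * e1 +
      (-(c p.1 * (starRingEnd ℂ) (c p.2)) / 2) * e2
  -- rewrite the double sum as a sum over pairs of tsums, then exchange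
  have step1 : (∑ i, ∑ j, c i * (starRingEnd ℂ) (c j) *
      ((Real.exp (-2 * π ^ 2 * (x i - x j) ^ 2 * σ ^ 2) *
        Real.cos (2 * π * (x i - x j) * μ) : ℝ) : ℂ)) = ∑' m, ∑ p : Fin n × Fin n, g p m := by
    rw [Summable.tsum_finsetSum (fun p _ => hsum p), Fintype.sum_prod_type]
    exact Finset.sum_congr rfl fun i _ => Finset.sum_congr rfl fun j _ => key (i, j)
  rw [step1]
  have hsum2 : Summable (fun m => ∑ p : Fin n × Fin n, g p m) :=
    summable_sum fun p _ => hsum p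
  rw [Complex.re_tsum hsum2]
  refine tsum_nonneg fun m => ?_
  -- show the m-th coefficient is a nonnegative real
  have hm : (∑ p : Fin n × Fin n, g p m) =
      ((((2 * a) ^ m / m.factorial *
        (Complex.normSq (∑ i, u i m) + Complex.normSq (∑ i, v i m)) / 2 : ℝ)) : ℂ) := by
    have h1 : ((Complex.normSq (∑ i, u i m) : ℝ) : ℂ) =
        ∑ i, ∑ j, u i m * (starRingEnd ℂ) (u j m) := by
      rw [← Complex.mul_conj, map_sum, Finset.sum_mul_sum]
    have h2 : ((Complex.normSq (∑ i, v i m) : ℝ) : ℂ) =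
        ∑ i, ∑ j, v i m * (starRingEnd ℂ) (v j m) := by
      rw [← Complex.mul_conj, map_sum, Finset.sum_mul_sum]
    push_cast [h1, h2]
    rw [Fintype.sum_prod_type]
    simp only [← Finset.sum_add_distrib, Finset.mul_sum, Finset.sum_div]
    refine Finset.sum_congr rfl fun i _ => Finset.sum_congr rfl fun j _ => ?_
    simp only [hg, hK, hu, hv, hR, map_mul, map_pow, Complex.conj_ofReal, Complex.conj_conj]
    push_cast
    ring
  rw [hm, Complex.ofReal_re]
  have h2a : (0:ℝ) ≤ (2 * a) ^ m / m.factorial := by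
    have : (0:ℝ) ≤ 2 * a := by rw [ha_def]; positivity
    positivity
  have hns : (0:ℝ) ≤ Complex.normSq (∑ i, u i m) + Complex.normSq (∑ i, v i m) :=
    add_nonneg (Complex.normSq_nonneg _) (Complex.normSq_nonneg _)
  exact div_nonneg (mul_nonneg h2a hns) (by norm_num)
end

section
/- For any weights w_1, ..., w_Q \geq 0, means \mu_q \in \mathbb{R}^P, and variances v_q^{(p)} \geq 0, the spectral mixture kernel k(\tau) = \sum_{q=1}^Q w_q \prod_{p=1}^P exp(-2\pi^2 \tau_p^2 v_q^{(p)}) \cos(2\pi \tau_p \mu_q^{(p)}) is a positive definite function on \mathbb{R}^P. -/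
open Real

open Complex Finset

lemma quad_nonneg {n N P : ℕ} (c : Fin n → ℂ) (g : Fin P → (Fin N × Bool) → Fin n → ℂ) :
    0 ≤ (∑ i, ∑ j, c i * (starRingEnd ℂ) (c j) *
      ∏ p, ∑ u : Fin N × Bool, g p u i * (starRingEnd ℂ) (g p u j)).re := by
  have key : (∑ i, ∑ j, c i * (starRingEnd ℂ) (c j) *
      ∏ p, ∑ u : Fin N × Bool, g p u i * (starRingEnd ℂ) (g p u j))
      = ∑ T : Fin P → Fin N × Bool,
        ((Complex.normSq (∑ i, c i * ∏ p, g p (T p) i) : ℝ) : ℂ) := by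
    simp_rw [Fintype.prod_sum, Finset.mul_sum]
    rw [Finset.sum_congr rfl fun i _ => Finset.sum_comm]
    rw [Finset.sum_comm]
    refine Finset.sum_congr rfl fun T _ => ?_
    rw [← Complex.mul_conj, map_sum, Finset.sum_mul_sum]
    refine Finset.sum_congr rfl fun i _ => Finset.sum_congr rfl fun j _ => ?_
    rw [Finset.prod_mul_distrib, ← map_prod]
    rw [map_mul]; ring
  rw [key, Complex.re_sum]
  exact Finset.sum_nonneg fun T _ => by simp [Complex.normSq_nonneg]



noncomputable def gfun (A B : ℝ) (N : ℕ) (u : Fin N × Bool) (y : ℝ) : ℂ :=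
  ((Real.sqrt ((2*A)^(u.1:ℕ) / ((u.1:ℕ).factorial * 2)) * y^(u.1:ℕ) * Real.exp (-(A*y^2)) : ℝ) : ℂ) *
  Complex.exp (Complex.I * ((if u.2 then (1:ℝ) else -1) * (B * y)))

lemma single_term (r₁ r₂ t₁ t₂ : ℝ) :
    ((r₁ : ℂ) * Complex.exp (Complex.I * (t₁:ℝ))) *
      (starRingEnd ℂ) ((r₂ : ℂ) * Complex.exp (Complex.I * (t₂:ℝ)))
    = ((r₁*r₂ : ℝ) : ℂ) * (((Real.cos (t₁ - t₂) : ℝ) : ℂ) + ((Real.sin (t₁ - t₂) : ℝ) : ℂ) * Complex.I) := by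
  have hconj : (starRingEnd ℂ) (Complex.exp (Complex.I * (t₂:ℝ))) = Complex.exp (-(Complex.I * t₂)) := by
    rw [← Complex.exp_conj]; congr 1; simp
  rw [map_mul, hconj, Complex.conj_ofReal]
  have : Complex.exp (Complex.I * (t₁:ℝ)) * Complex.exp (-(Complex.I * (t₂:ℝ)))
      = Complex.exp (Complex.I * ((t₁ - t₂ : ℝ) : ℂ)) := by
    rw [← Complex.exp_add]; push_cast; ring_nf
  have h2 : Complex.exp (Complex.I * ((t₁ - t₂ : ℝ) : ℂ))
      = ((Real.cos (t₁ - t₂) : ℝ) : ℂ) + ((Real.sin (t₁ - t₂) : ℝ) : ℂ) * Complex.I := by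
    rw [mul_comm, Complex.exp_mul_I, Complex.ofReal_cos, Complex.ofReal_sin]
  rw [mul_mul_mul_comm, this, h2]
  push_cast
  ring

lemma gfun_mul (A B : ℝ) (hA : 0 ≤ A) (N : ℕ) (y z : ℝ) :
    ∑ u : Fin N × Bool, gfun A B N u y * (starRingEnd ℂ) (gfun A B N u z)
    = (((∑ m ∈ Finset.range N, (2*A*(y*z))^m / m.factorial) *
        (Real.exp (-(A*y^2)) * Real.exp (-(A*z^2)) * Real.cos (B*(y-z)))) : ℝ) := by
  rw [Fintype.sum_prod_type]
  have hs : ∀ m : Fin N, ∑ s : Bool, gfun A B N (m, s) y * (starRingEnd ℂ) (gfun A B N (m, s) z)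
      = (((2*A*(y*z))^(m:ℕ) / (m:ℕ).factorial *
          (Real.exp (-(A*y^2)) * Real.exp (-(A*z^2)) * Real.cos (B*(y-z)))) : ℝ) := by
    intro m
    set ry := Real.sqrt ((2*A)^(m:ℕ) / ((m:ℕ).factorial * 2)) * y^(m:ℕ) * Real.exp (-(A*y^2)) with hry
    set rz := Real.sqrt ((2*A)^(m:ℕ) / ((m:ℕ).factorial * 2)) * z^(m:ℕ) * Real.exp (-(A*z^2)) with hrz
    have key : ry * rz * (2 * Real.cos (B*y - B*z))
        = (2*A*(y*z))^(m:ℕ) / (m:ℕ).factorial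
          * (Real.exp (-(A*y^2)) * Real.exp (-(A*z^2)) * Real.cos (B*(y-z))) := by
      have hsq := Real.mul_self_sqrt (show (0:ℝ) ≤ (2*A)^(m:ℕ)/(((m:ℕ).factorial : ℝ) * 2) by positivity)
      have harg : B*y - B*z = B*(y-z) := by ring
      have hpow : (2*A*(y*z))^(m:ℕ) = (2*A)^(m:ℕ) * (y^(m:ℕ) * z^(m:ℕ)) := by
        rw [mul_pow (2*A) (y*z), mul_pow y z]
      rw [hry, hrz, harg, hpow]
      linear_combination (2 * y^(m:ℕ) * z^(m:ℕ) * Real.exp (-(A*y^2)) * Real.exp (-(A*z^2))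
        * Real.cos (B*(y-z))) * hsq
    rw [Fintype.sum_bool]
    simp only [gfun, Bool.false_eq_true, if_false, if_true]
    simp only [Complex.ofReal_one, Complex.ofReal_neg, one_mul, neg_mul]
    simp only [← Complex.ofReal_mul, ← Complex.ofReal_neg]
    rw [single_term ry rz (B*y) (B*z), single_term ry rz (-(B*y)) (-(B*z))]
    have harg2 : -(B*y) - -(B*z) = -(B*y - B*z) := by ring
    rw [harg2, Real.cos_neg, Real.sin_neg]
    rw [← key]
    push_cast
    ring
  rw [Finset.sum_congr rfl fun m _ => hs m]
  rw [show (∑ m ∈ Finset.range N, (2*A*(y*z))^m / (m.factorial : ℝ)) *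
      (Real.exp (-(A*y^2)) * Real.exp (-(A*z^2)) * Real.cos (B*(y-z)))
      = ∑ m ∈ Finset.range N, (2*A*(y*z))^m / (m.factorial : ℝ) *
        (Real.exp (-(A*y^2)) * Real.exp (-(A*z^2)) * Real.cos (B*(y-z))) from Finset.sum_mul _ _ _]
  rw [Complex.ofReal_sum, ← Fin.sum_univ_eq_sum_range]



lemma exp_tendsto (t : ℝ) : Filter.Tendsto (fun N => ∑ m ∈ Finset.range N, t^m / m.factorial)
    Filter.atTop (nhds (Real.exp t)) := by
  rw [Real.exp_eq_exp_ℝ]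
  exact (NormedSpace.expSeries_div_hasSum_exp t).tendsto_sum_nat

lemma limit_eq (vv mm y z : ℝ) :
    Real.exp (2*(2*π^2*vv)*(y*z)) * (Real.exp (-(2*π^2*vv*y^2)) * Real.exp (-(2*π^2*vv*z^2)) *
      Real.cos (2*π*mm*(y-z)))
    = Real.exp (-2 * π ^ 2 * (y-z) ^ 2 * vv) * Real.cos (2 * π * (y-z) * mm) := by
  have h1 : -2 * π ^ 2 * (y-z) ^ 2 * vv
      = 2*(2*π^2*vv)*(y*z) + -(2*π^2*vv*y^2) + -(2*π^2*vv*z^2) := by ring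
  have h2 : 2 * π * (y-z) * mm = 2*π*mm*(y-z) := by ring
  rw [h1, h2, Real.exp_add, Real.exp_add]
  ring


section
variable {n N P : ℕ}

lemma re_form (c : Fin n → ℂ) (k : Fin n → Fin n → ℝ) :
    (∑ i, ∑ j, c i * (starRingEnd ℂ) (c j) * ((k i j : ℝ) : ℂ)).re
    = ∑ i, ∑ j, (c i * (starRingEnd ℂ) (c j)).re * k i j := by
  rw [Complex.re_sum]
  refine Finset.sum_congr rfl fun i _ => ?_
  rw [Complex.re_sum]
  exact Finset.sum_congr rfl fun j _ => by simp [Complex.mul_re]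

end

/-- The spectral mixture kernel is a positive definite function on ℝ^P. -/
theorem sm_kernel_posdef (P Q : ℕ) (w : Fin Q → ℝ) (hw : ∀ q, 0 ≤ w q)
    (μ : Fin Q → Fin P → ℝ) (v : Fin Q → Fin P → ℝ) (hv : ∀ q p, 0 ≤ v q p)
    (n : ℕ) (x : Fin n → Fin P → ℝ) (c : Fin n → ℂ) :
    0 ≤ (∑ i, ∑ j, c i * (starRingEnd ℂ) (c j) *
      ((∑ q, w q * ∏ p, Real.exp (-2 * π ^ 2 * (x i p - x j p) ^ 2 * v q p) *
        Real.cos (2 * π * (x i p - x j p) * μ q p) : ℝ) : ℂ)).re := by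
  rw [re_form c (fun i j => ∑ q, w q * ∏ p,
      Real.exp (-2 * π ^ 2 * (x i p - x j p) ^ 2 * v q p) *
      Real.cos (2 * π * (x i p - x j p) * μ q p))]
  set R : Fin n → Fin n → ℝ := fun i j => (c i * (starRingEnd ℂ) (c j)).re with hR
  set pf : ℕ → Fin Q → Fin P → Fin n → Fin n → ℝ := fun N q p i j =>
    (∑ m ∈ Finset.range N, (2*(2*π^2*v q p)*(x i p * x j p))^m / m.factorial) *
      (Real.exp (-(2*π^2*v q p*(x i p)^2)) * Real.exp (-(2*π^2*v q p*(x j p)^2)) *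
       Real.cos (2*π*μ q p*(x i p - x j p))) with hpf
  have hT : Filter.Tendsto (fun N => ∑ i, ∑ j, R i j * ∑ q, w q * ∏ p, pf N q p i j)
      Filter.atTop (nhds (∑ i, ∑ j, R i j * ∑ q, w q * ∏ p,
        Real.exp (-2 * π ^ 2 * (x i p - x j p) ^ 2 * v q p) *
        Real.cos (2 * π * (x i p - x j p) * μ q p))) := by
    refine tendsto_finset_sum _ fun i _ => tendsto_finset_sum _ fun j _ => ?_
    refine Filter.Tendsto.const_mul _ (tendsto_finset_sum _ fun q _ => ?_)
    refine Filter.Tendsto.const_mul _ (tendsto_finset_prod _ fun p _ => ?_)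
    have h := (exp_tendsto (2*(2*π^2*v q p)*(x i p * x j p))).mul_const
      (Real.exp (-(2*π^2*v q p*(x i p)^2)) * Real.exp (-(2*π^2*v q p*(x j p)^2)) *
       Real.cos (2*π*μ q p*(x i p - x j p)))
    rwa [limit_eq (v q p) (μ q p) (x i p) (x j p)] at h
  refine ge_of_tendsto' hT fun N => ?_
  have hswap : ∑ i, ∑ j, R i j * ∑ q, w q * ∏ p, pf N q p i j
      = ∑ q, w q * ∑ i, ∑ j, R i j * ∏ p, pf N q p i j := by
    simp_rw [Finset.mul_sum]
    rw [Finset.sum_congr rfl fun i _ => Finset.sum_comm, Finset.sum_comm]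
    exact Finset.sum_congr rfl fun q _ => Finset.sum_congr rfl fun i _ =>
      Finset.sum_congr rfl fun j _ => by ring
  rw [hswap]
  refine Finset.sum_nonneg fun q _ => mul_nonneg (hw q) ?_
  set g : Fin P → (Fin N × Bool) → Fin n → ℂ := fun p u i =>
    gfun (2*π^2*v q p) (2*π*μ q p) N u (x i p) with hg
  have h0 := quad_nonneg c g
  have hk : ∀ i j : Fin n, (∏ p, ∑ u : Fin N × Bool, g p u i * (starRingEnd ℂ) (g p u j))
      = ((∏ p, pf N q p i j : ℝ) : ℂ) := by
    intro i j
    rw [Complex.ofReal_prod]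
    refine Finset.prod_congr rfl fun p _ => ?_
    exact gfun_mul (2*π^2*v q p) (2*π*μ q p)
      (mul_nonneg (by positivity) (hv q p)) N (x i p) (x j p)
  rw [Finset.sum_congr rfl fun i _ => Finset.sum_congr rfl fun j _ => by rw [hk i j],
    re_form c (fun i j => ∏ p, pf N q p i j)] at h0
  exact h0
end
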